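/- Let C be a longest chain of a finite poset P and define the subposets P_0,…,P_k as the sets P_i = {u ∈ P : u ⋠ c_i, u ⋡ c_{i+1}} (with the virtual-element conventions). Then every antichain A of P \ C is contained in at least one of the sets P_0,…,P_k. -/

import Mathlib

open Finset

variable {α : Type*}

/-- `u ≼ cᵢ` with the virtual conventions: the virtual element `c_{k+1}` lies above
everything (and `c₀` below everything, so `u ≼ c₀` never holds). -/
def leC [PartialOrder α] (k : ℕ) (c : ℕ → α) (u : α) (i : ℕ) : Prop :=
  i = k + 1 ∨ (1 ≤ i ∧ i ≤ k ∧ u ≤ c i)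

/-- `cᵢ ≼ u` with the virtual conventions: `c₀` lies below everything. -/
def cLe [PartialOrder α] (k : ℕ) (c : ℕ → α) (u : α) (i : ℕ) : Prop :=
  i = 0 ∨ (1 ≤ i ∧ i ≤ k ∧ c i ≤ u)

/-- `s_u = max { i : cᵢ ≼ u }`. -/
noncomputable def sIdx [PartialOrder α] (k : ℕ) (c : ℕ → α) (u : α) : ℕ :=
  sSup {i | cLe k c u i}

/-- `l_u = min { i : u ≼ cᵢ }`. -/
noncomputable def lIdx [PartialOrder α] (k : ℕ) (c : ℕ → α) (u : α) : ℕ :=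
  sInf {i | leC k c u i}

/-- `u ∈ Pᵢ`, i.e. `u ⋠ cᵢ` and `u ⋡ c_{i+1}`. -/
def memP [PartialOrder α] (k : ℕ) (c : ℕ → α) (i : ℕ) (u : α) : Prop :=
  ¬ leC k c u i ∧ ¬ cLe k c u (i + 1)

/-- `u` is incomparable with `cᵢ` (virtual elements are comparable to everything). -/
def incompC [PartialOrder α] (k : ℕ) (c : ℕ → α) (u : α) (i : ℕ) : Prop :=
  ¬ leC k c u i ∧ ¬ cLe k c u i

/-- The underlying set `C = {c₁, …, c_k}` of the chain. -/
def chainSet (k : ℕ) (c : ℕ → α) : Set α := c '' (Set.Icc 1 k)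

/-- `c₁ ≺ c₂ ≺ ⋯ ≺ c_k` is a chain of maximum cardinality in the finite poset `α`. -/
def IsLongestChain [PartialOrder α] [Fintype α] (k : ℕ) (c : ℕ → α) : Prop :=
  (∀ i j, 1 ≤ i → i < j → j ≤ k → c i < c j) ∧
  ∀ D : Finset α, IsChain (· ≤ ·) (D : Set α) → D.card ≤ k


lemma cross_aux [PartialOrder α] {k : ℕ} {c : ℕ → α}
    (hmono : ∀ i j, 1 ≤ i → i < j → j ≤ k → c i < c j) {u v : α} {i j : ℕ}
    (hu : cLe k c u i) (hv : leC k c v j) (hij : j ≤ i) :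
    v ≤ u ∧ (v = u → u ∈ chainSet k c) := by
  rcases hv with hv | ⟨hj1, hjk, hvcj⟩
  · subst hv
    rcases hu with hu | ⟨hi1, hik, hciu⟩ <;> omega
  rcases hu with hu | ⟨hi1, hik, hciu⟩
  · omega
  rcases lt_or_eq_of_le hij with hlt | heq
  · have hcc : c j < c i := hmono j i hj1 hlt hik
    have : v < u := lt_of_le_of_lt hvcj (lt_of_lt_of_le hcc hciu)
    exact ⟨this.le, fun h => absurd (h ▸ this) (lt_irrefl u)⟩
  · subst heq
    refine ⟨hvcj.trans hciu, fun h => ?_⟩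
    have : u = c j := le_antisymm (h ▸ hvcj) hciu
    exact ⟨j, ⟨hj1, hjk⟩, this.symm⟩

lemma cLe_bdd [PartialOrder α] (k : ℕ) (c : ℕ → α) (v : α) :
    BddAbove {i | cLe k c v i} := by
  refine ⟨k, fun j hj => ?_⟩
  rcases hj with h | ⟨_, h, _⟩ <;> omega

/-- Every antichain of `P \ C` is contained in at least one of the posets `P₀, …, P_k`. -/
theorem stmt_2 [PartialOrder α] [Fintype α] (k : ℕ) (c : ℕ → α)
    (hC : IsLongestChain k c) (A : Set α) (hA : IsAntichain (· ≤ ·) A)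
    (hAC : ∀ u ∈ A, u ∉ chainSet k c) :
    ∃ i ≤ k, ∀ u ∈ A, memP k c i u := by
  obtain ⟨hmono, -⟩ := hC
  rcases A.eq_empty_or_nonempty with rfl | hne
  · exact ⟨0, Nat.zero_le k, fun u hu => absurd hu (Set.notMem_empty u)⟩
  obtain ⟨w, hwA, hwmax⟩ := Set.Finite.exists_maximalFor (sIdx k c) A (Set.toFinite A) hne
  set i := sIdx k c w with hi
  have hmem : cLe k c w i := by
    have : {j | cLe k c w j}.Nonempty := ⟨0, Or.inl rfl⟩
    exact Nat.sSup_mem this (cLe_bdd k c w)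
  have hik : i ≤ k := by
    rcases hmem with h | ⟨_, h, _⟩ <;> omega
  refine ⟨i, hik, fun v hvA => ⟨?_, ?_⟩⟩
  · intro hle
    obtain ⟨hvw, heq⟩ := cross_aux hmono hmem hle le_rfl
    by_cases h : v = w
    · exact hAC w hwA (heq h)
    · exact hA hvA hwA h hvw
  · intro hcle
    have h1 : i + 1 ≤ sIdx k c v := le_csSup (cLe_bdd k c v) hcle
    have h2 : sIdx k c v ≤ i := by
      by_contra h
      have := hwmax (j := v) hvA (by omega)
      omega
    omega
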